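/- Let R be a ring and A, B two right ideals of R that are similar, i.e., R/A ≅ R/B as right R-modules. If A has a serial factorization, then B has a serial factorization, and moreover either A = B or the right R-module R/A (equivalently R/B) is uniserial. -/

import Mathlib

open MulOpposite

universe u

/-- The product `A·B` of two right ideals of `R` (right ideals are `Rᵐᵒᵖ`-submodules of `R`):
the set of all finite sums of products `a * b` with `a ∈ A`, `b ∈ B`. -/
def rmul {R : Type u} [Ring R] (A B : Submodule Rᵐᵒᵖ R) : Submodule Rᵐᵒᵖ R :=
  Submodule.span Rᵐᵒᵖ {x : R | ∃ a ∈ A, ∃ b ∈ B, x = a * b}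

/-- The product `A₁⋯Aₙ` of a (possibly empty) list of right ideals. -/
def rprod {R : Type u} [Ring R] : List (Submodule Rᵐᵒᵖ R) → Submodule Rᵐᵒᵖ R
  | [] => ⊤
  | [A] => A
  | A :: l => rmul A (rprod l)

/-- A finite family of right ideals is coindependent if `Aᵢ + ⋂_{j ≠ i} Aⱼ = R` for every `i`. -/
def Coindep {R : Type u} [Ring R] {n : ℕ} (A : Fin n → Submodule Rᵐᵒᵖ R) : Prop :=
  ∀ i, A i ⊔ (⨅ j, ⨅ (_ : j ≠ i), A j) = ⊤

/-- A module is uniserial if its submodules are linearly ordered by inclusion. -/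
def IsUniserialMod (S : Type*) [Ring S] (M : Type*) [AddCommGroup M] [Module S M] : Prop :=
  ∀ N P : Submodule S M, N ≤ P ∨ P ≤ N

/-- A right ideal is a two-sided ideal if it is also closed under left multiplication. -/
def IsTwoSidedRid {R : Type u} [Ring R] (A : Submodule Rᵐᵒᵖ R) : Prop :=
  ∀ (r : R), ∀ x ∈ A, r * x ∈ A

/-- A serial factorization of a right ideal `A`: a factorization `A = A₁⋯Aₙ` into proper
right ideals that pairwise commute, form a coindependent family, and are such that every
quotient `R/Aᵢ` is a uniserial right `R`-module. -/
def IsSerialFact {R : Type u} [Ring R] {n : ℕ} (A : Submodule Rᵐᵒᵖ R)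
    (F : Fin n → Submodule Rᵐᵒᵖ R) : Prop :=
  (∀ i, F i ≠ ⊤) ∧ (∀ i j, rmul (F i) (F j) = rmul (F j) (F i)) ∧ Coindep F ∧
    (∀ i, IsUniserialMod Rᵐᵒᵖ (R ⧸ F i)) ∧ A = rprod (List.ofFn F)

/-- A right ideal has a serial factorization if it admits one of some length. -/
def HasSerialFact {R : Type u} [Ring R] (A : Submodule Rᵐᵒᵖ R) : Prop :=
  ∃ (n : ℕ) (F : Fin n → Submodule Rᵐᵒᵖ R), IsSerialFact A F

/-- A right chain ring: its right ideals are linearly ordered by inclusion. -/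
def IsRightChainRing (R : Type u) [Ring R] : Prop :=
  ∀ A B : Submodule Rᵐᵒᵖ R, A ≤ B ∨ B ≤ A

/-- A ring is right duo if every right ideal is a two-sided ideal. -/
def IsRightDuo (R : Type u) [Ring R] : Prop :=
  ∀ A : Submodule Rᵐᵒᵖ R, IsTwoSidedRid A

/-- The principal right ideal `rR`. -/
def rspan {R : Type u} [Ring R] (r : R) : Submodule Rᵐᵒᵖ R :=
  Submodule.span Rᵐᵒᵖ ({r} : Set R)

section Aux
variable {R : Type u} [Ring R]

theorem mem_rmul {A B : Submodule Rᵐᵒᵖ R} {a b : R} (ha : a ∈ A) (hb : b ∈ B) :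
    a * b ∈ rmul A B := Submodule.subset_span ⟨a, ha, b, hb, rfl⟩

theorem rmul_le {A B C : Submodule Rᵐᵒᵖ R} (h : ∀ a ∈ A, ∀ b ∈ B, a * b ∈ C) :
    rmul A B ≤ C := Submodule.span_le.2 (by rintro x ⟨a, ha, b, hb, rfl⟩; exact h a ha b hb)

theorem rmul_le_left {A B : Submodule Rᵐᵒᵖ R} : rmul A B ≤ A :=
  rmul_le fun a ha b _ => A.smul_mem (op b) ha

theorem rmul_top {A : Submodule Rᵐᵒᵖ R} : rmul A ⊤ = A := by
  refine le_antisymm rmul_le_left fun a ha => ?_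
  simpa using mem_rmul ha (Submodule.mem_top (x := (1:R)))

theorem rmul_assoc (A B C : Submodule Rᵐᵒᵖ R) :
    rmul (rmul A B) C = rmul A (rmul B C) := by
  refine le_antisymm (rmul_le fun x hx c hc => ?_) (rmul_le fun a ha y hy => ?_)
  · have key : ∀ (r : R), x * (r * c) ∈ rmul A (rmul B C) := by
      induction hx using Submodule.span_induction with
      | mem y hy =>
        obtain ⟨a, ha, b, hb, rfl⟩ := hy
        intro r
        have h1 : (a * b) * (r * c) = a * ((b * r) * c) := by noncomm_ring
        rw [h1]
        exact mem_rmul ha (mem_rmul (B.smul_mem (op r) hb) hc)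
      | zero => intro r; simp
      | add x y _ _ hx hy => intro r; rw [add_mul]; exact add_mem (hx r) (hy r)
      | smul a x _ hx =>
        intro r
        have h1 : (a • x) * (r * c) = x * ((unop a * r) * c) := by
          rw [MulOpposite.smul_eq_mul_unop]; noncomm_ring
        rw [h1]; exact hx _
    simpa using key 1
  · induction hy using Submodule.span_induction with
    | mem y hy =>
      obtain ⟨b, hb, c, hc, rfl⟩ := hy
      rw [← mul_assoc]; exact mem_rmul (mem_rmul ha hb) hc
    | zero => simp
    | add x y _ _ hx hy => rw [mul_add]; exact add_mem hx hy
    | smul r y _ hy =>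
      rw [MulOpposite.smul_eq_mul_unop, ← mul_assoc, ← MulOpposite.smul_eq_mul_unop]
      exact Submodule.smul_mem _ _ hy

theorem rprod_cons (X : Submodule Rᵐᵒᵖ R) (l : List (Submodule Rᵐᵒᵖ R)) :
    rprod (X :: l) = rmul X (rprod l) := by
  cases l with
  | nil => exact (rmul_top).symm
  | cons Y l => rfl

theorem rmul_rprod_comm (X : Submodule Rᵐᵒᵖ R) :
    ∀ (l : List (Submodule Rᵐᵒᵖ R)), l ≠ [] → (∀ Y ∈ l, rmul X Y = rmul Y X) →
      rmul X (rprod l) = rmul (rprod l) X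
  | [], h, _ => absurd rfl h
  | [Y], _, hc => hc Y (by simp)
  | Y :: Z :: l, _, hc => by
    have IH := rmul_rprod_comm X (Z :: l) (by simp)
      (fun W hW => hc W (List.mem_cons_of_mem _ hW))
    rw [rprod_cons, ← rmul_assoc, hc Y (by simp), rmul_assoc, IH, ← rmul_assoc]

theorem rprod_eq_inf : ∀ (n : ℕ) (F : Fin n → Submodule Rᵐᵒᵖ R),
    (∀ i j, rmul (F i) (F j) = rmul (F j) (F i)) → Coindep F →
    rprod (List.ofFn F) = ⨅ i, F i := by
  intro n
  induction n with
  | zero => intro F _ _; exact le_antisymm (le_iInf fun i => i.elim0) le_top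
  | succ n ih =>
    intro F hcomm hco
    set G : Fin n → Submodule Rᵐᵒᵖ R := fun j => F j.succ with hG
    have hY : rprod (List.ofFn G) = ⨅ j, G j := by
      refine ih G (fun i j => hcomm _ _) (fun i => ?_)
      have h1 : (⨅ j, ⨅ (_ : j ≠ i.succ), F j) ≤ ⨅ j, ⨅ (_ : j ≠ i), G j := by
        refine le_iInf fun j => le_iInf fun hj => ?_
        exact iInf_le_of_le j.succ (iInf_le_of_le (by simpa [Fin.succ_inj] using hj) le_rfl)
      refine top_unique ?_
      rw [← hco i.succ]
      exact sup_le_sup le_rfl h1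
    rcases n with _ | m
    · have h0 : rprod (List.ofFn F) = F 0 := by
        rw [List.ofFn_succ, List.ofFn_zero]
        rfl
      rw [h0]
      refine le_antisymm (le_iInf fun i => le_of_eq (congrArg F (Fin.ext ?_)))
        (iInf_le _ 0)
      exact (Nat.lt_one_iff.1 i.isLt).symm
    · have hne : List.ofFn G ≠ [] := by simp
      have hcX : ∀ Y ∈ List.ofFn G, rmul (F 0) Y = rmul Y (F 0) := by
        intro Y hY'
        obtain ⟨j, rfl⟩ := List.mem_ofFn.1 hY'
        exact hcomm _ _
      have hcomax : F 0 ⊔ (⨅ j, G j) = ⊤ := by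
        refine top_unique ?_
        rw [← hco 0]
        exact sup_le_sup le_rfl (le_iInf fun j =>
          iInf_le_of_le j.succ (iInf_le_of_le (Fin.succ_ne_zero j) le_rfl))
      have hcm := rmul_rprod_comm (F 0) (List.ofFn G) hne hcX
      have hmain : rmul (F 0) (rprod (List.ofFn G)) = F 0 ⊓ ⨅ j, G j := by
        refine le_antisymm (le_inf rmul_le_left ?_) ?_
        · rw [hcm]
          exact le_trans rmul_le_left hY.le
        · intro x hx
          obtain ⟨hx1, hx2⟩ := Submodule.mem_inf.1 hx
          obtain ⟨a, ha, c, hc, hac⟩ :=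
            Submodule.mem_sup.1 (hcomax ▸ Submodule.mem_top (x := (1:R)))
          have hxs : x = x * a + x * c := by rw [← mul_add, hac, mul_one]
          rw [hxs]
          refine add_mem ?_ (mem_rmul hx1 (hY ▸ hc))
          rw [hcm]
          exact mem_rmul (hY ▸ hx2) ha
      rw [List.ofFn_succ, ← hG, rprod_cons, hmain]
      refine le_antisymm (le_iInf fun i => ?_)
        (le_inf (iInf_le _ 0) (le_iInf fun j => iInf_le _ j.succ))
      rcases Fin.eq_zero_or_eq_succ i with rfl | ⟨j, rfl⟩
      · exact inf_le_left
      · exact le_trans inf_le_right (iInf_le _ j)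

theorem twosided_of_fact {n : ℕ} (hn : 2 ≤ n) (F : Fin n → Submodule Rᵐᵒᵖ R)
    (hcomm : ∀ i j, rmul (F i) (F j) = rmul (F j) (F i)) (hco : Coindep F) (i : Fin n) :
    IsTwoSidedRid (F i) := by
  intro r x hx
  obtain ⟨j, hji⟩ : ∃ j : Fin n, j ≠ i := by
    rcases Nat.lt_or_ge 0 i.val with h | h
    · exact ⟨⟨0, by omega⟩, fun hh => by simp [Fin.ext_iff] at hh; omega⟩
    · exact ⟨⟨1, by omega⟩, fun hh => by simp [Fin.ext_iff] at hh; omega⟩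
  have hcomax : F i ⊔ F j = ⊤ := by
    refine top_unique ?_
    rw [← hco i]
    exact sup_le_sup le_rfl (iInf_le_of_le j (iInf_le_of_le hji le_rfl))
  obtain ⟨a, ha, b, hb, hab⟩ :=
    Submodule.mem_sup.1 (hcomax ▸ Submodule.mem_top (x := r))
  have h1 : r * x = a * x + b * x := by rw [← add_mul, hab]
  rw [h1]
  refine add_mem ((F i).smul_mem (op x) ha) ?_
  exact rmul_le_left ((hcomm i j).symm ▸ mem_rmul hb hx)

theorem key_unit {C : Submodule Rᵐᵒᵖ R} (hC : C ≠ ⊤) (hts : IsTwoSidedRid C)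
    (hU : IsUniserialMod Rᵐᵒᵖ (R ⧸ C)) {t r : R} (htr : 1 - t * r ∈ C) :
    ∀ s, t * s ∈ C → s ∈ C := by
  have hCtop : ∀ y : R, y ∈ C → (1 : R) - y ∈ C → False := by
    intro y hy h1y
    apply hC
    have h1 : (1 : R) ∈ C := by simpa using add_mem h1y hy
    refine top_unique fun z _ => ?_
    simpa using C.smul_mem (op z) h1
  set e := r * t with he
  have hee : e * e - e ∈ C := by
    have h1 : (t * r - 1) * t ∈ C := C.smul_mem (op t) (by simpa using neg_mem htr)
    have h2 : r * ((t * r - 1) * t) ∈ C := hts r _ h1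
    have h3 : r * ((t * r - 1) * t) = e * e - e := by rw [he]; noncomm_ring
    rwa [h3] at h2
  have h1e : (1 : R) - e ∈ C := by
    rcases hU (Submodule.span Rᵐᵒᵖ {Submodule.Quotient.mk e})
        (Submodule.span Rᵐᵒᵖ {Submodule.Quotient.mk (1 - e)}) with h | h
    · exfalso
      obtain ⟨s, hs⟩ := Submodule.mem_span_singleton.1
        (h (Submodule.mem_span_singleton_self _))
      rw [← Submodule.Quotient.mk_smul, MulOpposite.smul_eq_mul_unop] at hs
      have hs' : (1 - e) * unop s - e ∈ C := (Submodule.Quotient.eq _).1 hs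
      have h2 : e * ((1 - e) * unop s - e) ∈ C := hts e _ hs'
      have h3 : e * ((1 - e) * unop s - e) = (e - e * e) * unop s - e * e := by noncomm_ring
      rw [h3] at h2
      have h4 : (e - e * e) * unop s ∈ C := C.smul_mem (op (unop s)) (by simpa using neg_mem hee)
      have h5 : e * e ∈ C := by simpa using sub_mem h4 h2
      have h6 : e ∈ C := by simpa using sub_mem h5 hee
      -- now t ∈ C : t = (1 - t*r)*t + t*(r*t)
      have h7 : t * e ∈ C := hts t _ h6
      have h8 : (1 - t * r) * t ∈ C := C.smul_mem (op t) htr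
      have h9 : t ∈ C := by
        have : (1 - t * r) * t + t * e = t := by rw [he]; noncomm_ring
        simpa [this] using add_mem h8 h7
      have h10 : t * r ∈ C := C.smul_mem (op r) h9
      exact hCtop _ h10 htr
    · obtain ⟨s, hs⟩ := Submodule.mem_span_singleton.1
        (h (Submodule.mem_span_singleton_self _))
      rw [← Submodule.Quotient.mk_smul, MulOpposite.smul_eq_mul_unop] at hs
      have hs' : e * unop s - (1 - e) ∈ C := (Submodule.Quotient.eq _).1 hs
      have h2 : (1 - e) * (e * unop s - (1 - e)) ∈ C := hts (1 - e) _ hs'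
      have h3 : (1 - e) * (e * unop s - (1 - e)) =
          (e - e * e) * unop s - ((1 - e) + (e * e - e)) := by noncomm_ring
      rw [h3] at h2
      have h4 : (e - e * e) * unop s ∈ C := C.smul_mem (op (unop s)) (by simpa using neg_mem hee)
      have h5 : (1 - e) + (e * e - e) ∈ C := by simpa using sub_mem h4 h2
      simpa using sub_mem h5 hee
  intro s hts'
  have h1 : r * (t * s) ∈ C := hts r _ hts'
  have h2 : (1 - e) * s ∈ C := C.smul_mem (op s) h1e
  have h3 : (1 - e) * s + r * (t * s) = s := by rw [he]; noncomm_ring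
  simpa [h3] using add_mem h2 h1

theorem uniserial_congr {S : Type*} [Ring S] {M M' : Type*} [AddCommGroup M] [AddCommGroup M']
    [Module S M] [Module S M'] (φ : M ≃ₗ[S] M') (h : IsUniserialMod S M) :
    IsUniserialMod S M' := by
  have key : ∀ N P : Submodule S M', N.comap (φ : M →ₗ[S] M') ≤ P.comap (φ : M →ₗ[S] M') → N ≤ P := by
    intro N P hle x hx
    have h1 : φ.symm x ∈ N.comap (φ : M →ₗ[S] M') := by simp [hx]
    simpa using hle h1
  intro N P
  rcases h (N.comap (φ : M →ₗ[S] M')) (P.comap (φ : M →ₗ[S] M')) with h' | h'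
  · exact Or.inl (key _ _ h')
  · exact Or.inr (key _ _ h')

end Aux

/-- Theorem 3.3: if `A` and `B` are similar right ideals (`R/A ≅ R/B`) and `A` has a serial
factorization, then `B` has a serial factorization, and either `A = B` or `R/A` is
uniserial. -/
theorem statement12 {R : Type u} [Ring R] [Nontrivial R]
    (A B : Submodule Rᵐᵒᵖ R)
    (hsim : Nonempty ((R ⧸ A) ≃ₗ[Rᵐᵒᵖ] (R ⧸ B)))
    (hA : HasSerialFact A) :
    HasSerialFact B ∧ (A = B ∨ IsUniserialMod Rᵐᵒᵖ (R ⧸ A)) := by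
  obtain ⟨φ⟩ := hsim
  obtain ⟨n, F, hne, hcomm, hco, huni, hAeq⟩ := hA
  have htop_iff : A = ⊤ → B = ⊤ := by
    intro h
    subst h
    haveI : Subsingleton (R ⧸ (⊤ : Submodule Rᵐᵒᵖ R)) :=
      Submodule.Quotient.subsingleton_iff.2 rfl
    haveI : Subsingleton (R ⧸ B) := φ.toEquiv.symm.subsingleton
    exact Submodule.Quotient.subsingleton_iff.1 ‹_›
  match n, F, hne, hcomm, hco, huni, hAeq with
  | 0, F, hne, hcomm, hco, huni, hAeq =>
    have hAtop : A = ⊤ := by rw [hAeq, List.ofFn_zero]; rfl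
    have hBtop : B = ⊤ := htop_iff hAtop
    refine ⟨⟨0, F, fun i => i.elim0, fun i => i.elim0, fun i => i.elim0, fun i => i.elim0, ?_⟩,
      Or.inl (hAtop.trans hBtop.symm)⟩
    rw [hBtop, List.ofFn_zero]; rfl
  | 1, F, hne, hcomm, hco, huni, hAeq =>
    have hAF : A = F 0 := by rw [hAeq, List.ofFn_succ, List.ofFn_zero]; rfl
    have hAuni : IsUniserialMod Rᵐᵒᵖ (R ⧸ A) := by rw [hAF]; exact huni 0
    have hBuni : IsUniserialMod Rᵐᵒᵖ (R ⧸ B) := uniserial_congr φ hAuni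
    have hBne : B ≠ ⊤ := by
      intro h
      subst h
      haveI : Subsingleton (R ⧸ (⊤ : Submodule Rᵐᵒᵖ R)) :=
        Submodule.Quotient.subsingleton_iff.2 rfl
      haveI : Subsingleton (R ⧸ A) := φ.toEquiv.subsingleton
      exact hne 0 (hAF ▸ Submodule.Quotient.subsingleton_iff.1 ‹Subsingleton (R ⧸ A)›)
    refine ⟨⟨1, fun _ => B, fun _ => hBne, fun _ _ => rfl, ?_, fun _ => hBuni, ?_⟩,
      Or.inr hAuni⟩
    · intro i
      have h1 : ∀ j : Fin 1, ¬ (j ≠ i) := fun j hj => hj (Fin.ext (by omega))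
      simp [iInf_neg (h1 _)]
    · rw [List.ofFn_succ, List.ofFn_zero]; rfl
  | (m + 2), F, hne, hcomm, hco, huni, hAeq =>
    have hts : ∀ i, IsTwoSidedRid (F i) := twosided_of_fact (by omega) F hcomm hco
    have hAinf : A = ⨅ i, F i := hAeq.trans (rprod_eq_inf _ F hcomm hco)
    set ψ := φ.symm with hψ
    obtain ⟨t, ht⟩ := Submodule.Quotient.mk_surjective A (ψ (Submodule.Quotient.mk 1))
    have hmul : ∀ s : R, ψ (Submodule.Quotient.mk s) = Submodule.Quotient.mk (t * s) := by
      intro s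
      have h1 : (Submodule.Quotient.mk s : R ⧸ B) = op s • Submodule.Quotient.mk 1 := by
        rw [← Submodule.Quotient.mk_smul]
        simp [op_smul_eq_mul]
      rw [h1, map_smul, ← ht, ← Submodule.Quotient.mk_smul]
      simp [op_smul_eq_mul]
    have hBt : ∀ s : R, s ∈ B ↔ t * s ∈ A := by
      intro s
      rw [← Submodule.Quotient.mk_eq_zero, ← Submodule.Quotient.mk_eq_zero,
        ← hmul s, LinearEquiv.map_eq_zero_iff]
    obtain ⟨r, hr⟩ : ∃ r : R, 1 - t * r ∈ A := by
      obtain ⟨z, hz⟩ := ψ.surjective (Submodule.Quotient.mk 1)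
      obtain ⟨r, rfl⟩ := Submodule.Quotient.mk_surjective B z
      refine ⟨r, ?_⟩
      rw [hmul r] at hz
      simpa using neg_mem ((Submodule.Quotient.eq _).1 hz)
    have htrFi : ∀ i, 1 - t * r ∈ F i := fun i => by
      have := hAinf ▸ hr
      exact (Submodule.mem_iInf _).1 this i
    have hBA : B = A := by
      ext s
      rw [hBt s, hAinf, Submodule.mem_iInf, Submodule.mem_iInf]
      exact forall_congr' fun i =>
        ⟨fun h => key_unit (hne i) (hts i) (huni i) (htrFi i) s h, fun h => hts i t s h⟩
    exact ⟨hBA ▸ ⟨m + 2, F, hne, hcomm, hco, huni, hAeq⟩, Or.inl hBA.symm⟩
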